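/- arXiv:1607.02413 — 4 statements merged into one kernel-verified Lean document; each statement's English description precedes it below -/
import Mathlib

section
/- For all real β with 0 < β, we have -log(1 - β/(1+β)) - β/(1+β) ≤ (1/2) · log(1 + β²). -/
theorem stmt_0 (β : ℝ) (hβ : 0 < β) :
    -Real.log (1 - β / (1 + β)) - β / (1 + β) ≤ (1 / 2) * Real.log (1 + β ^ 2) := by
  have hb1 : (0:ℝ) < 1 + β := by linarith
  have h1 : 1 - β / (1 + β) = (1 + β)⁻¹ := by field_simp; ring
  rw [h1, Real.log_inv, neg_neg]
  -- reduce to exp inequality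
  set x : ℝ := 2 * β / (1 + β) with hx
  have hx0 : 0 ≤ x := by positivity
  have hexp : 1 + x + x ^ 2 / 2 ≤ Real.exp x := Real.quadratic_le_exp_of_nonneg hx0
  have hinv : Real.exp (-x) ≤ 1 - x + x ^ 2 / 2 := by
    rw [Real.exp_neg]
    rw [inv_le_iff_one_le_mul₀ (Real.exp_pos x)]
    nlinarith [Real.exp_pos x, sq_nonneg x, sq_nonneg (x^2)]
  -- key: (1+β)^2 * exp(-x) ≤ 1 + β^2
  have hkey : (1 + β) ^ 2 * Real.exp (-x) ≤ 1 + β ^ 2 := by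
    have h2 : (1 + β) ^ 2 * (1 - x + x ^ 2 / 2) = 1 + β ^ 2 := by
      rw [hx]; field_simp; ring
    nlinarith [sq_nonneg (1 + β)]
  have hlog : Real.log ((1 + β) ^ 2) - x ≤ Real.log (1 + β ^ 2) := by
    have hpos : (0:ℝ) < (1 + β) ^ 2 * Real.exp (-x) := by positivity
    have := Real.log_le_log hpos hkey
    rwa [Real.log_mul (by positivity) (Real.exp_ne_zero _), Real.log_exp, ← sub_eq_add_neg]
      at this
  rw [Real.log_pow] at hlog
  push_cast at hlog
  have : x = β / (1 + β) + β / (1 + β) := by rw [hx]; ring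
  linarith
end

section
/- For integers m̃₁,…,m̃_L and n with 0 ≤ m̃_j ≤ m for all j and ∑_j m̃_j = n, and for a > 0, we have ∑_{j=1}^L [ -log(1 - m̃_j·a/(1+ma)) - m̃_j·a/(1+ma) ] ≤ (n/m)·[ -log(1 - ma/(1+ma)) - ma/(1+ma) ]. -/
open Real

lemma aux_stmt10 (t x : ℝ) (ht0 : 0 ≤ t) (ht1 : t ≤ 1) (hx0 : 0 ≤ x) (hx1 : x < 1) :
    -Real.log (1 - t * x) - t * x ≤ t * (-Real.log (1 - x) - x) := by
  have h1x : (1 : ℝ) - x ∈ Set.Ioi (0:ℝ) := by simp; linarith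
  have h1 : (1 : ℝ) ∈ Set.Ioi (0:ℝ) := by simp
  have key := strictConcaveOn_log_Ioi.concaveOn.2 h1x h1 ht0 (by linarith : (0:ℝ) ≤ 1 - t)
    (by ring)
  simp only [smul_eq_mul, Real.log_one, mul_zero, mul_one, add_zero] at key
  have : t * (1 - x) + (1 - t) = 1 - t * x := by ring
  rw [this] at key
  nlinarith

theorem stmt_10 (L m n : ℕ) (hm : 1 ≤ m) (mt : Fin L → ℕ)
    (hmt : ∀ j, mt j ≤ m) (hsum : ∑ j, mt j = n) (a : ℝ) (ha : 0 < a) :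
    ∑ j, (-Real.log (1 - (mt j : ℝ) * a / (1 + m * a)) - (mt j : ℝ) * a / (1 + m * a))
      ≤ ((n : ℝ) / m) *
        (-Real.log (1 - (m : ℝ) * a / (1 + m * a)) - (m : ℝ) * a / (1 + m * a)) := by
  have hm' : (0:ℝ) < m := by exact_mod_cast hm
  have hc : (0:ℝ) < 1 + m * a := by positivity
  set x : ℝ := (m : ℝ) * a / (1 + m * a) with hx
  have hx0 : 0 ≤ x := by positivity
  have hx1 : x < 1 := by
    rw [hx, div_lt_one hc]; linarith
  have step : ∀ j, -Real.log (1 - (mt j : ℝ) * a / (1 + m * a)) - (mt j : ℝ) * a / (1 + m * a)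
      ≤ ((mt j : ℝ) / m) * (-Real.log (1 - x) - x) := by
    intro j
    have hrw : (mt j : ℝ) * a / (1 + m * a) = ((mt j : ℝ) / m) * x := by
      rw [hx]; field_simp
    rw [hrw]
    exact aux_stmt10 _ _ (by positivity) (by
      rw [div_le_one hm']; exact_mod_cast hmt j) hx0 hx1
  calc ∑ j, (-Real.log (1 - (mt j : ℝ) * a / (1 + m * a)) - (mt j : ℝ) * a / (1 + m * a))
      ≤ ∑ j, ((mt j : ℝ) / m) * (-Real.log (1 - x) - x) :=
        Finset.sum_le_sum fun j _ => step j
    _ = ((n : ℝ) / m) * (-Real.log (1 - x) - x) := by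
        rw [← Finset.sum_mul, ← Finset.sum_div]
        congr 2
        exact_mod_cast hsum
end

section
/- For integers m̃₁,…,m̃_L and n with 0 ≤ m̃_j ≤ m for all j and ∑_j m̃_j = n, and for a > 0, we have ∑_{j=1}^L [ -log(1 - m̃_j·a/(1+ma)) - m̃_j·a/(1+ma) ] ≤ (n/(2m))·log(1 + (ma)²). -/
lemma stmt_11_aux (b : ℝ) (hb : 0 ≤ b) :
    Real.log (1 + b) - b / (1 + b) ≤ (1/2) * Real.log (1 + b ^ 2) := by
  set f : ℝ → ℝ := fun x => (1/2) * Real.log (1 + x^2) - Real.log (1 + x) + x / (1 + x)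
    with hf
  have hderiv : ∀ x : ℝ, -1 < x →
      HasDerivAt f ((1/2) * (2*x/(1+x^2)) - 1/(1+x) + (1*(1+x) - x*1)/(1+x)^2) x := by
    intro x hx
    have hxpos : (0:ℝ) < 1 + x := by linarith
    have hne : (1:ℝ) + x ≠ 0 := ne_of_gt hxpos
    have h1 : HasDerivAt (fun x : ℝ => 1 + x^2) (2*x) x := by
      simpa using (hasDerivAt_pow 2 x).const_add 1
    have h2 : HasDerivAt (fun x : ℝ => Real.log (1 + x^2)) (2*x/(1+x^2)) x :=
      h1.log (by positivity)
    have h3 : HasDerivAt (fun x : ℝ => 1 + x) 1 x := (hasDerivAt_id x).const_add 1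
    have h4 : HasDerivAt (fun x : ℝ => Real.log (1 + x)) (1/(1+x)) x := by
      simpa using h3.log hne
    have h5 : HasDerivAt (fun x : ℝ => x/(1+x)) ((1*(1+x) - x*1)/(1+x)^2) x :=
      (hasDerivAt_id x).div h3 hne
    exact ((h2.const_mul (1/2)).sub h4).add h5
  have hmono : MonotoneOn f (Set.Ici 0) := by
    apply monotoneOn_of_deriv_nonneg (convex_Ici 0)
    · intro x hx
      have hx' : (-1:ℝ) < x := by simp at hx; linarith
      exact (hderiv x hx').continuousAt.continuousWithinAt
    · intro x hx
      rw [interior_Ici] at hx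
      have hx' : (-1:ℝ) < x := by simp at hx; linarith
      exact (hderiv x hx').differentiableAt.differentiableWithinAt
    · intro x hx
      rw [interior_Ici] at hx
      have hx0 : (0:ℝ) < x := hx
      have hx' : (-1:ℝ) < x := by linarith
      rw [(hderiv x hx').deriv]
      have hxpos : (0:ℝ) < 1 + x := by linarith
      have heq : (1/2) * (2*x/(1+x^2)) - 1/(1+x) + (1*(1+x) - x*1)/(1+x)^2
          = 2*x^2 / ((1+x^2)*(1+x)^2) := by
        field_simp
        ring
      rw [heq]
      positivity
  have h0 : f 0 = 0 := by simp [hf]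
  have := hmono (Set.self_mem_Ici) (Set.mem_Ici.mpr hb) hb
  rw [h0] at this
  simp only [hf] at this
  linarith

theorem stmt_11 (L m n : ℕ) (hm : 1 ≤ m) (mt : Fin L → ℕ)
    (hmt : ∀ j, mt j ≤ m) (hsum : ∑ j, mt j = n) (a : ℝ) (ha : 0 < a) :
    ∑ j, (-Real.log (1 - (mt j : ℝ) * a / (1 + m * a)) - (mt j : ℝ) * a / (1 + m * a))
      ≤ ((n : ℝ) / (2 * m)) * Real.log (1 + ((m : ℝ) * a) ^ 2) := by
  have hm0 : (0:ℝ) < m := by exact_mod_cast hm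
  have hβ : 0 < (m:ℝ) * a := by positivity
  have hD : (0:ℝ) < 1 + (m:ℝ) * a := by linarith
  set G : ℝ := Real.log (1 + (m:ℝ)*a) - (m:ℝ)*a / (1 + (m:ℝ)*a) with hG
  have key : ∀ j, -Real.log (1 - (mt j : ℝ) * a / (1 + m * a)) - (mt j : ℝ) * a / (1 + m * a)
      ≤ ((mt j : ℝ)/m) * G := by
    intro j
    have hk0 : (0:ℝ) ≤ (mt j : ℝ) := Nat.cast_nonneg _
    have hkm : (mt j : ℝ) ≤ m := Nat.cast_le.mpr (hmt j)
    set t : ℝ := (mt j : ℝ)/m with ht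
    have ht0 : 0 ≤ t := by positivity
    have ht1 : t ≤ 1 := by rw [ht, div_le_one hm0]; exact hkm
    have hcomb : t * (1/(1 + (m:ℝ)*a)) + (1-t) * 1 = 1 - (mt j : ℝ) * a / (1 + (m:ℝ)*a) := by
      rw [ht]; field_simp; ring
    have hconc := (strictConcaveOn_log_Ioi.concaveOn).2
      (show (1/(1 + (m:ℝ)*a)) ∈ Set.Ioi (0:ℝ) from Set.mem_Ioi.mpr (by positivity))
      (show (1:ℝ) ∈ Set.Ioi (0:ℝ) from Set.mem_Ioi.mpr (by norm_num))
      ht0 (by linarith : (0:ℝ) ≤ 1 - t) (by ring)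
    simp only [smul_eq_mul, Real.log_one, mul_zero, add_zero] at hconc
    rw [hcomb] at hconc
    rw [one_div, Real.log_inv] at hconc
    -- hconc : t * -Real.log (1 + m*a) ≤ Real.log (1 - mt j * a / (1 + m*a))
    have hta : t * ((m:ℝ)*a / (1 + (m:ℝ)*a)) = (mt j : ℝ) * a / (1 + (m:ℝ)*a) := by
      rw [ht]; field_simp
    rw [hG]
    nlinarith [hconc, hta]
  have hsum' : ∑ j, ((mt j : ℝ)/m) * G = ((n:ℝ)/m) * G := by
    rw [← Finset.sum_mul, ← Finset.sum_div]
    congr 2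
    rw [← hsum]
    push_cast
    rfl
  have hGle : G ≤ (1/2) * Real.log (1 + ((m:ℝ)*a)^2) := stmt_11_aux _ (le_of_lt hβ)
  calc ∑ j, (-Real.log (1 - (mt j : ℝ) * a / (1 + m * a)) - (mt j : ℝ) * a / (1 + m * a))
      ≤ ∑ j, ((mt j : ℝ)/m) * G := Finset.sum_le_sum (fun j _ => key j)
    _ = ((n:ℝ)/m) * G := hsum'
    _ ≤ ((n:ℝ)/m) * ((1/2) * Real.log (1 + ((m:ℝ)*a)^2)) := by
        apply mul_le_mul_of_nonneg_left hGle
        positivity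
    _ = ((n : ℝ) / (2 * m)) * Real.log (1 + ((m : ℝ) * a) ^ 2) := by ring
end

section
/- For integers p and m with 2 ≤ m and m dividing p, the number of partitions of {1,…,p} into p/m unordered blocks of size m equals p!/((m!)^{p/m}·(p/m)!), and this is lower bounded by C(⌊p/2⌋, m)^{(1/2)·⌊p/m⌋}. -/
/-- The number of partitions of `{1,…,p}` into blocks of size `m`. -/
noncomputable def numBlockPartitions (p m : ℕ) : ℕ :=
  Nat.card {P : Finpartition (Finset.univ : Finset (Fin p)) // ∀ s ∈ P.parts, s.card = m}

section Counting

open Finset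

set_option linter.unusedSectionVars false

variable {α κ : Type*} [Fintype α] [DecidableEq α] [Fintype κ] [DecidableEq κ]

/-- Permutations preserving a function `f` correspond to families of permutations of fibers. -/
def stabEquiv (f : α → κ) : {σ : Equiv.Perm α // f ∘ σ = f} ≃ (∀ j : κ, Equiv.Perm {a // f a = j}) where
  toFun σ j := Equiv.subtypeEquiv σ.1 (fun a => by
    rw [show f (σ.1 a) = f a from congrFun σ.2 a])
  invFun g := ⟨((Equiv.sigmaFiberEquiv f).symm.trans (Equiv.sigmaCongrRight g)).trans
      (Equiv.sigmaFiberEquiv f), by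
    funext a
    simp [Equiv.sigmaFiberEquiv, Equiv.sigmaCongrRight]
    exact (g (f a) ⟨a, rfl⟩).2⟩
  left_inv σ := by
    apply Subtype.ext
    ext a
    simp [Equiv.sigmaFiberEquiv, Equiv.sigmaCongrRight, Equiv.subtypeEquiv]
  right_inv g := by
    funext j
    ext ⟨x, hx⟩
    subst hx
    simp [Equiv.sigmaFiberEquiv, Equiv.sigmaCongrRight, Equiv.subtypeEquiv]

/-- If two functions have fibers of the same cardinalities, some permutation carries one to
the other. -/
theorem exists_perm_comp (f f' : α → κ)
    (h : ∀ j, Fintype.card {a // f a = j} = Fintype.card {a // f' a = j}) :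
    ∃ σ : Equiv.Perm α, f' ∘ σ = f := by
  refine ⟨((Equiv.sigmaFiberEquiv f).symm.trans
    (Equiv.sigmaCongrRight (fun j => Fintype.equivOfCardEq (h j)))).trans
      (Equiv.sigmaFiberEquiv f'), ?_⟩
  funext a
  simp [Equiv.sigmaFiberEquiv, Equiv.sigmaCongrRight]
  exact ((Fintype.equivOfCardEq (h (f a))) ⟨a, rfl⟩).2

theorem card_perm_eq_card_A (m : ℕ) (f₀ : α → κ)
    (hf₀ : ∀ j, Fintype.card {a // f₀ a = j} = m) :
    Nat.factorial (Fintype.card α) =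
      Nat.card {f : α → κ // ∀ j, Fintype.card {a // f a = j} = m} * Nat.factorial m ^ Fintype.card κ := by
  classical
  set A := {f : α → κ // ∀ j, Fintype.card {a // f a = j} = m}
  have Φprop : ∀ σ : Equiv.Perm α, ∀ j,
      Fintype.card {a // (f₀ ∘ σ.symm) a = j} = m := by
    intro σ j
    exact Eq.trans (Fintype.card_congr ((Equiv.subtypeEquiv σ.symm (fun a => Iff.rfl)) :
      {a : α // (f₀ ∘ σ.symm) a = j} ≃ {a : α // f₀ a = j})) (hf₀ j)
  set Φ : Equiv.Perm α → A := fun σ => ⟨f₀ ∘ σ.symm, Φprop σ⟩ with hΦ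
  -- fiber over f equiv to stabilizer of f₀
  have fibEquiv : ∀ f : A, Nat.card {σ : Equiv.Perm α // Φ σ = f}
      = Nat.card {τ : Equiv.Perm α // f₀ ∘ τ = f₀} := by
    intro f
    obtain ⟨σf, hσf⟩ := exists_perm_comp f₀ f.1 (fun j => ((hf₀ j).trans (f.2 j).symm))
    apply Nat.card_congr
    have hσf' : f₀ ∘ σf.symm = f.1 := by
      funext a
      have := congrFun hσf (σf.symm a)
      simpa using this.symm
    refine ⟨fun σ => ⟨σf.trans σ.1.symm, ?_⟩, fun τ => ⟨τ.1.symm.trans σf, ?_⟩, ?_, ?_⟩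
    · have hσ : f₀ ∘ σ.1.symm = f.1 := congrArg Subtype.val σ.2
      funext x
      simp only [Function.comp_apply, Equiv.trans_apply]
      rw [show f₀ (σ.1.symm (σf x)) = f.1 (σf x) from congrFun hσ (σf x)]
      exact congrFun hσf x
    · apply Subtype.ext
      funext x
      simp only [hΦ, Function.comp_apply, Equiv.symm_trans_apply, Equiv.symm_symm]
      rw [← congrFun hσf' x]
      simp only [Function.comp_apply]
      exact congrFun τ.2 (σf.symm x)
    · intro σ; apply Subtype.ext; ext x; simp
    · intro τ; apply Subtype.ext; ext x; simp
  have h1 : Nat.card {τ : Equiv.Perm α // f₀ ∘ τ = f₀} = Nat.factorial m ^ Fintype.card κ := by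
    rw [Nat.card_congr (stabEquiv f₀), Nat.card_pi]
    simp only [Nat.card_eq_fintype_card, Fintype.card_perm, hf₀]
    simp [Finset.prod_const]
  calc Nat.factorial (Fintype.card α) = Nat.card (Equiv.Perm α) := by
        simp [Nat.card_eq_fintype_card, Fintype.card_perm]
    _ = Nat.card (Σ f : A, {σ : Equiv.Perm α // Φ σ = f}) :=
        Nat.card_congr (Equiv.sigmaFiberEquiv Φ).symm
    _ = ∑ f : A, Nat.card {σ : Equiv.Perm α // Φ σ = f} := by
        simp only [Nat.card_eq_fintype_card, Fintype.card_sigma]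
    _ = ∑ _f : A, Nat.factorial m ^ Fintype.card κ := by
        exact Finset.sum_congr rfl (fun f _ => (fibEquiv f).trans h1)
    _ = Nat.card A * Nat.factorial m ^ Fintype.card κ := by
        simp [Nat.card_eq_fintype_card, Finset.sum_const, mul_comm]

/-- The partition of `univ` into fibers of a function with nonempty fibers. -/
def partitionOf (f : α → κ) (hf : ∀ j, (univ.filter (fun a => f a = j)).Nonempty) :
    Finpartition (univ : Finset α) where
  parts := univ.image (fun j => univ.filter (fun a => f a = j))
  supIndep := by
    rw [Finset.supIndep_iff_pairwiseDisjoint]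
    rintro t₁ h₁ t₂ h₂ hne
    simp only [coe_image, Set.mem_image, mem_coe, mem_univ, true_and] at h₁ h₂
    obtain ⟨j₁, rfl⟩ := h₁
    obtain ⟨j₂, rfl⟩ := h₂
    have hj : j₁ ≠ j₂ := by rintro rfl; exact hne rfl
    simp only [Function.onFun, id_eq]
    rw [Finset.disjoint_left]
    intro a ha₁ ha₂
    simp only [mem_filter] at ha₁ ha₂
    exact hj (ha₁.2 ▸ ha₂.2 ▸ rfl)
  sup_parts := by
    apply le_antisymm
    · intro a _; exact mem_univ a
    · intro a _
      rw [Finset.mem_sup]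
      exact ⟨univ.filter (fun x => f x = f a), mem_image_of_mem _ (mem_univ (f a)),
        by simp⟩
  bot_notMem := by
    simp only [bot_eq_empty, mem_image, mem_univ, true_and, not_exists]
    intro j h
    exact (hf j).ne_empty h

lemma partitionOf_parts (f : α → κ) (hf) :
    (partitionOf f hf).parts = univ.image (fun j => univ.filter (fun a => f a = j)) := rfl

lemma partitionOf_part (f : α → κ) (hf) (a : α) :
    (partitionOf f hf).part a = univ.filter (fun x => f x = f a) :=
  Finpartition.part_eq_of_mem _ (mem_image_of_mem _ (mem_univ (f a))) (by simp)

theorem card_A_eq_card_partitions (m : ℕ) (hm : 0 < m)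
    (hcard : Fintype.card α = Fintype.card κ * m) :
    Nat.card {f : α → κ // ∀ j, Fintype.card {a // f a = j} = m} =
      Nat.card {P : Finpartition (univ : Finset α) // ∀ s ∈ P.parts, s.card = m} *
        Nat.factorial (Fintype.card κ) := by
  classical
  set A := {f : α → κ // ∀ j, Fintype.card {a // f a = j} = m} with hA
  set X := {P : Finpartition (univ : Finset α) // ∀ s ∈ P.parts, s.card = m} with hX
  -- fibers as filters
  have filt_card : ∀ (f : α → κ) (j : κ),
      (univ.filter (fun a => f a = j)).card = Fintype.card {a // f a = j} := by
    intro f j; rw [Fintype.card_subtype]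
  have fib_ne : ∀ (f : A) (j : κ), (univ.filter (fun a => f.1 a = j)).Nonempty := by
    intro f j
    rw [← Finset.card_pos, filt_card, f.2 j]; exact hm
  have f_surj : ∀ f : A, Function.Surjective f.1 := by
    intro f j
    obtain ⟨a, ha⟩ := fib_ne f j
    exact ⟨a, (mem_filter.mp ha).2⟩
  set Ψ : A → X := fun f => ⟨partitionOf f.1 (fib_ne f), by
    intro s hs
    rw [partitionOf_parts] at hs
    obtain ⟨j, _, rfl⟩ := mem_image.mp hs
    rw [filt_card, f.2 j]⟩ with hΨ
  -- key: if Ψ f = Ψ f' then f-fibers refine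
  have key : ∀ (f f' : A), Ψ f = Ψ f' → ∀ a b : α, f'.1 a = f'.1 b → f.1 a = f.1 b := by
    intro f f' h a b hab
    have h2 : (partitionOf f.1 (fib_ne f)).part a = (partitionOf f.1 (fib_ne f)).part b := by
      have := congrArg Subtype.val h
      simp only [hΨ] at this
      rw [this, partitionOf_part, partitionOf_part, hab]
    rw [partitionOf_part, partitionOf_part] at h2
    have : b ∈ univ.filter (fun x => f.1 x = f.1 b) := by simp
    rw [← h2] at this
    exact ((mem_filter.mp this).2).symm
  -- each fiber of Ψ has cardinality (card κ)!
  have fibcard : ∀ P : X, Nat.card {f : A // Ψ f = P} = Nat.factorial (Fintype.card κ) := by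
    intro P
    -- base point
    have hpc : P.1.parts.card = Fintype.card κ := by
      have h1 : Fintype.card α = P.1.parts.card * m := by
        rw [← Finset.card_univ, ← P.1.sum_card_parts,
          Finset.sum_congr rfl (fun s hs => P.2 s hs), Finset.sum_const, smul_eq_mul]
      exact Nat.eq_of_mul_eq_mul_right hm (h1.symm.trans hcard)
    have e : κ ≃ ↥P.1.parts :=
      Fintype.equivOfCardEq (by rw [Fintype.card_coe, hpc])
    set fP : α → κ := fun a => e.symm ⟨P.1.part a, P.1.part_mem.2 (mem_univ a)⟩ with hfP
    have fP_fib : ∀ j, univ.filter (fun a => fP a = j) = (e j : Finset α) := by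
      intro j
      ext a
      simp only [mem_filter, mem_univ, true_and, hfP]
      rw [Equiv.symm_apply_eq, Subtype.ext_iff]
      constructor
      · intro h; rw [← h]; exact P.1.mem_part (mem_univ a)
      · intro h; exact P.1.part_eq_of_mem (e j).2 h
    have fP_mem : ∀ j, Fintype.card {a // fP a = j} = m := by
      intro j
      rw [← filt_card, fP_fib j]
      exact P.2 _ (e j).2
    set fPA : A := ⟨fP, fP_mem⟩ with hfPA
    have hΨfP : Ψ fPA = P := by
      apply Subtype.ext
      apply Finpartition.ext
      show (partitionOf fPA.1 (fib_ne fPA)).parts = P.1.parts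
      rw [partitionOf_parts]
      ext t
      simp only [mem_image, mem_univ, true_and]
      constructor
      · rintro ⟨j, rfl⟩
        rw [fP_fib j]; exact (e j).2
      · intro ht
        exact ⟨e.symm ⟨t, ht⟩, by rw [fP_fib, Equiv.apply_symm_apply]⟩
    -- the map from Perm κ to the fiber
    have Mmem : ∀ ρ : Equiv.Perm κ, ∀ j, Fintype.card {a // (ρ ∘ fP) a = j} = m := by
      intro ρ j
      rw [Fintype.card_congr ((Equiv.subtypeEquivRight (fun a => ?_)) :
        {a // (ρ ∘ fP) a = j} ≃ {a // fP a = ρ.symm j})]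
      · exact fP_mem _
      · simp only [Function.comp_apply]
        exact ⟨fun h => by rw [← h, Equiv.symm_apply_apply], fun h => by rw [h, Equiv.apply_symm_apply]⟩
    have MΨ : ∀ ρ : Equiv.Perm κ, Ψ ⟨ρ ∘ fP, Mmem ρ⟩ = P := by
      intro ρ
      rw [← hΨfP]
      apply Subtype.ext
      apply Finpartition.ext
      show (partitionOf ((⟨ρ ∘ fP, Mmem ρ⟩ : A)).1 (fib_ne ⟨ρ ∘ fP, Mmem ρ⟩)).parts
          = (partitionOf fPA.1 (fib_ne fPA)).parts
      rw [partitionOf_parts, partitionOf_parts]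
      ext t
      simp only [mem_image, mem_univ, true_and]
      constructor
      · rintro ⟨j, rfl⟩
        refine ⟨ρ.symm j, ?_⟩
        ext a
        simp only [mem_filter, mem_univ, true_and, Function.comp_apply]
        exact ⟨fun h => by rw [show fP a = ρ.symm j from h, Equiv.apply_symm_apply], fun h => by rw [← h, Equiv.symm_apply_apply]⟩
      · rintro ⟨j, rfl⟩
        refine ⟨ρ j, ?_⟩
        ext a
        simp only [mem_filter, mem_univ, true_and, Function.comp_apply]
        exact ⟨fun h => ρ.injective h, fun h => by rw [show fP a = j from h]⟩
    have hbij : Function.Bijective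
        (fun ρ : Equiv.Perm κ => (⟨⟨ρ ∘ fP, Mmem ρ⟩, MΨ ρ⟩ : {f : A // Ψ f = P})) := by
      constructor
      · intro ρ₁ ρ₂ h
        have h' : ρ₁ ∘ fP = ρ₂ ∘ fP := congrArg (Subtype.val ∘ Subtype.val) h
        ext j
        obtain ⟨a, rfl⟩ := f_surj fPA j
        exact congrFun h' a
      · rintro ⟨f, hf⟩
        have hsurj := f_surj fPA
        set r : κ → κ := fun j => f.1 (Function.surjInv hsurj j) with hr
        have hrf : r ∘ fP = f.1 := by
          funext a
          have h1 : fPA.1 (Function.surjInv hsurj (fP a)) = fPA.1 a :=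
            Function.surjInv_eq hsurj (fP a)
          exact key f fPA (hf.trans hΨfP.symm) _ a h1
        have hrsurj : Function.Surjective r := by
          intro j
          obtain ⟨a, ha⟩ := f_surj f j
          exact ⟨fP a, by rw [← ha, ← hrf]; rfl⟩
        have hrbij : Function.Bijective r :=
          Finite.surjective_iff_bijective.mp hrsurj
        refine ⟨Equiv.ofBijective r hrbij, ?_⟩
        apply Subtype.ext
        apply Subtype.ext
        show (Equiv.ofBijective r hrbij) ∘ fP = f.1
        exact hrf
    have hc := Nat.card_eq_of_bijective _ hbij
    rw [← hc, Nat.card_eq_fintype_card, Fintype.card_perm]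
  -- sum over fibers
  calc Nat.card A = Nat.card (Σ P : X, {f : A // Ψ f = P}) :=
        Nat.card_congr (Equiv.sigmaFiberEquiv Ψ).symm
    _ = ∑ P : X, Nat.card {f : A // Ψ f = P} := by
        simp only [Nat.card_eq_fintype_card, Fintype.card_sigma]
    _ = ∑ _P : X, Nat.factorial (Fintype.card κ) :=
        Finset.sum_congr rfl (fun P _ => fibcard P)
    _ = Nat.card X * Nat.factorial (Fintype.card κ) := by
        simp [Nat.card_eq_fintype_card, Finset.sum_const, mul_comm]

theorem main_count (m : ℕ) (hm : 0 < m) (f₀ : α → κ)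
    (hf₀ : ∀ j, Fintype.card {a // f₀ a = j} = m) :
    Nat.factorial (Fintype.card α) =
      Nat.card {P : Finpartition (univ : Finset α) // ∀ s ∈ P.parts, s.card = m} *
        (Nat.factorial m ^ Fintype.card κ * Nat.factorial (Fintype.card κ)) := by
  have hcard : Fintype.card α = Fintype.card κ * m := by
    rw [Fintype.card_congr (Equiv.sigmaFiberEquiv f₀).symm, Fintype.card_sigma]
    simp [hf₀, Finset.sum_const, Finset.card_univ]
  rw [card_perm_eq_card_A m f₀ hf₀, card_A_eq_card_partitions m hm hcard]
  ring

end Counting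

def fstFiberEquiv {κ β : Type*} (j : κ) : {x : κ × β // x.1 = j} ≃ β where
  toFun x := x.1.2
  invFun b := ⟨(j, b), rfl⟩
  left_inv := by rintro ⟨⟨j', b⟩, rfl⟩; rfl
  right_inv b := rfl

theorem factorial_eq_numBlockPartitions_mul (p m : ℕ) (hm : 0 < m) (hdvd : m ∣ p) :
    Nat.factorial p =
      numBlockPartitions p m * (Nat.factorial m ^ (p / m) * Nat.factorial (p / m)) := by
  obtain ⟨k, hk⟩ := hdvd
  have hkk : p / m = k := by rw [hk, Nat.mul_div_cancel_left _ hm]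
  have hpk : p = k * m := by rw [hk, mul_comm]
  set e : Fin p ≃ Fin k × Fin m := (finCongr hpk).trans finProdFinEquiv.symm with he
  have hf₀ : ∀ j : Fin k, Fintype.card {i : Fin p // (e i).1 = j} = m := by
    intro j
    rw [Fintype.card_congr ((Equiv.subtypeEquiv e (fun i => Iff.rfl)).trans (fstFiberEquiv j))]
    exact Fintype.card_fin m
  have h := main_count (κ := Fin k) m hm (fun i => (e i).1) hf₀
  rw [Fintype.card_fin, Fintype.card_fin] at h
  rw [hkk]
  exact h

section Analytic

open Real Filter

open Real Filter

lemma stirlingSeq_ge (n : ℕ) : Real.sqrt π ≤ Stirling.stirlingSeq (n + 1) := by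
  have h1 : Filter.Tendsto (fun m => Stirling.stirlingSeq (m + 1)) atTop (nhds (Real.sqrt π)) :=
    Stirling.tendsto_stirlingSeq_sqrt_pi.comp (tendsto_add_atTop_nat 1)
  exact Antitone.le_of_tendsto Stirling.stirlingSeq'_antitone h1 n

lemma stirlingSeq_le (n : ℕ) : Stirling.stirlingSeq (n + 1) ≤ Real.exp 1 / Real.sqrt 2 := by
  have := Stirling.stirlingSeq'_antitone (Nat.zero_le n)
  simpa [Stirling.stirlingSeq_one] using this

lemma factorial_stirling (n : ℕ) (hn : 1 ≤ n) :
    (Nat.factorial n : ℝ) = Stirling.stirlingSeq n * (Real.sqrt (2 * n) * (n / Real.exp 1) ^ n) := by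
  have hp : (0:ℝ) < n := by exact_mod_cast hn
  have h : Real.sqrt (2 * n) * ((n : ℝ) / Real.exp 1) ^ n ≠ 0 := by positivity
  rw [Stirling.stirlingSeq]
  field_simp

lemma factorial_lower (n : ℕ) (hn : 1 ≤ n) :
    Real.sqrt (2 * π * n) * ((n : ℝ) / Real.exp 1) ^ n ≤ (Nat.factorial n : ℝ) := by
  obtain ⟨l, rfl⟩ := Nat.exists_eq_add_of_le hn
  have h := stirlingSeq_ge l
  rw [factorial_stirling _ hn]
  have hpos : (0:ℝ) ≤ ((1 + l : ℕ) : ℝ) / Real.exp 1 := by positivity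
  have h2 : Real.sqrt (2 * π * (1 + l : ℕ)) = Real.sqrt π * Real.sqrt (2 * (1 + l : ℕ)) := by
    rw [← Real.sqrt_mul (by positivity)]
    ring_nf
  rw [h2]
  have hc : (1 + l) = l + 1 := by ring
  calc Real.sqrt π * Real.sqrt (2 * ((1+l : ℕ) : ℝ)) * (((1+l : ℕ) : ℝ) / Real.exp 1) ^ (1+l)
      ≤ Stirling.stirlingSeq (1+l) * (Real.sqrt (2 * ((1+l:ℕ) : ℝ)) * (((1+l:ℕ) : ℝ) / Real.exp 1) ^ (1+l)) := by
        rw [← mul_assoc]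
        apply mul_le_mul_of_nonneg_right _ (by positivity)
        apply mul_le_mul_of_nonneg_right _ (by positivity)
        rw [hc]; exact stirlingSeq_ge l
    _ = _ := rfl

lemma factorial_upper (n : ℕ) (hn : 1 ≤ n) :
    (Nat.factorial n : ℝ) ≤ Real.exp 1 * Real.sqrt n * ((n : ℝ) / Real.exp 1) ^ n := by
  obtain ⟨l, rfl⟩ := Nat.exists_eq_add_of_le hn
  rw [factorial_stirling _ hn]
  have hc : (1 + l) = l + 1 := by ring
  have h1 : Stirling.stirlingSeq (1 + l) ≤ Real.exp 1 / Real.sqrt 2 := by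
    rw [hc]; exact stirlingSeq_le l
  have h2 : (Real.exp 1 / Real.sqrt 2) * Real.sqrt (2 * ((1+l:ℕ):ℝ)) = Real.exp 1 * Real.sqrt ((1+l:ℕ):ℝ) := by
    rw [Real.sqrt_mul (by norm_num)]
    field_simp
  calc Stirling.stirlingSeq (1+l) * (Real.sqrt (2 * ((1+l:ℕ):ℝ)) * (((1+l:ℕ):ℝ) / Real.exp 1) ^ (1+l))
      ≤ (Real.exp 1 / Real.sqrt 2) * (Real.sqrt (2 * ((1+l:ℕ):ℝ)) * (((1+l:ℕ):ℝ) / Real.exp 1) ^ (1+l)) := by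
        apply mul_le_mul_of_nonneg_right h1 (by positivity)
    _ = Real.exp 1 * Real.sqrt ((1+l:ℕ):ℝ) * (((1+l:ℕ):ℝ) / Real.exp 1) ^ (1+l) := by
        rw [← mul_assoc, h2]

open Real

lemma exp_one_sq_le : Real.exp 1 ^ 2 ≤ 8 := by
  have h := Real.exp_one_lt_d9
  nlinarith [Real.exp_pos 1]

lemma ind_claim : ∀ m : ℕ, 2 ≤ m → 4 * Real.exp 1 ^ m * Real.sqrt m ≤ Real.exp 1 * 4 ^ m := by
  intro m hm
  induction m, hm using Nat.le_induction with
  | base =>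
    have h1 : Real.exp 1 * Real.sqrt 2 ≤ 4 := by
      nlinarith [sq_nonneg (4 - Real.exp 1 * Real.sqrt 2), Real.sq_sqrt (by norm_num : (0:ℝ) ≤ 2),
        exp_one_sq_le, Real.sqrt_nonneg 2, Real.exp_pos 1]
    have h2 : (0:ℝ) ≤ 4 * Real.exp 1 := by positivity
    calc 4 * Real.exp 1 ^ 2 * Real.sqrt 2 = (4 * Real.exp 1) * (Real.exp 1 * Real.sqrt 2) := by ring
      _ ≤ (4 * Real.exp 1) * 4 := by exact mul_le_mul_of_nonneg_left h1 h2
      _ = Real.exp 1 * 4 ^ 2 := by ring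
  | succ m hm ih =>
    push_cast
    have hm1 : (1:ℝ) ≤ (m:ℝ) := by exact_mod_cast Nat.one_le_of_lt hm
    have h1 : Real.exp 1 * Real.sqrt ((m:ℝ) + 1) ≤ 4 * Real.sqrt m := by
      have e1 : Real.exp 1 * Real.sqrt ((m:ℝ)+1) = Real.sqrt (Real.exp 1 ^ 2 * ((m:ℝ)+1)) := by
        rw [Real.sqrt_mul (by positivity), Real.sqrt_sq (Real.exp_pos 1).le]
      have e2 : (4:ℝ) * Real.sqrt m = Real.sqrt (16 * m) := by
        rw [show (16:ℝ)*m = 4^2*m by ring, Real.sqrt_mul (by positivity), Real.sqrt_sq (by norm_num)]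
      rw [e1, e2]
      apply Real.sqrt_le_sqrt
      nlinarith [exp_one_sq_le]
    calc 4 * Real.exp 1 ^ (m+1) * Real.sqrt ((m:ℝ)+1)
        = (4 * Real.exp 1 ^ m) * (Real.exp 1 * Real.sqrt ((m:ℝ)+1)) := by ring
      _ ≤ (4 * Real.exp 1 ^ m) * (4 * Real.sqrt m) := by
          apply mul_le_mul_of_nonneg_left h1 (by positivity)
      _ = 4 * (4 * Real.exp 1 ^ m * Real.sqrt m) := by ring
      _ ≤ 4 * (Real.exp 1 * 4 ^ m) := by apply mul_le_mul_of_nonneg_left ih (by norm_num)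
      _ = Real.exp 1 * 4 ^ (m+1) := by ring

lemma g_claim (m k : ℕ) (hm : 2 ≤ m) (hk : 2 ≤ k) :
    Real.exp 1 * Real.sqrt m * ((k : ℝ) / Real.exp 1) ^ 2 ≤ (2 * k / Real.exp 1) ^ m := by
  set E := Real.exp 1 with hE
  have hE0 : (0:ℝ) < E := Real.exp_pos 1
  have hK0 : (0:ℝ) < (k:ℝ) := by positivity
  have hK2 : (2:ℝ) ≤ (k:ℝ) := by exact_mod_cast hk
  have hmm : m - 2 + 2 = m := Nat.sub_add_cancel hm
  have hkpow : (2:ℝ) ^ (m-2) ≤ (k:ℝ) ^ (m-2) :=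
    pow_le_pow_left₀ (by norm_num) hK2 _
  have hind := ind_claim m hm
  rw [← hE] at hind
  have h2a : ((2:ℝ)^(m-2))^2 = 4^(m-2) := by
    rw [← pow_mul, mul_comm, pow_mul]; norm_num
  have h4 : (4:ℝ) ^ m = 16 * ((2:ℝ)^(m-2))^2 := by
    conv_lhs => rw [← hmm]
    rw [pow_add, h2a]; ring
  have expand : (2*(k:ℝ))^m = (2^(m-2)*(k:ℝ)^(m-2)) * (4*(k:ℝ)^2) := by
    conv_lhs => rw [← hmm]
    rw [mul_pow, pow_add, pow_add]; ring
  rw [div_pow, div_pow, expand, show E * Real.sqrt m * ((k:ℝ)^2/E^2)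
      = (E * Real.sqrt m * (k:ℝ)^2)/E^2 by ring,
    div_le_div_iff₀ (by positivity) (by positivity)]
  have hh1 : (4*E^m*Real.sqrt m)*(E*(k:ℝ)^2) ≤ (E*4^m)*(E*(k:ℝ)^2) :=
    mul_le_mul_of_nonneg_right hind (by positivity)
  rw [h4] at hh1
  have hh2 : (2:ℝ)^(m-2) * (16*(2:ℝ)^(m-2)*(k:ℝ)^2*E^2)
      ≤ (k:ℝ)^(m-2) * (16*(2:ℝ)^(m-2)*(k:ℝ)^2*E^2) :=
    mul_le_mul_of_nonneg_right hkpow (by positivity)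
  nlinarith [hh1, hh2]

lemma master (m k : ℕ) (hm : 2 ≤ m) (hk : 2 ≤ k) :
    (((m * k / 2 : ℕ).choose m : ℝ)) ^ k *
        ((Nat.factorial m : ℝ) ^ k * (Nat.factorial k : ℝ)) ^ 2
      ≤ ((Nat.factorial (m * k) : ℝ)) ^ 2 := by
  set E := Real.exp 1 with hE
  have hE0 : (0:ℝ) < E := Real.exp_pos 1
  set M : ℝ := (m:ℝ) with hM
  set K : ℝ := (k:ℝ) with hK
  set p : ℕ := m * k with hp
  set P : ℝ := (p:ℝ) with hP
  have hMK : P = M * K := by rw [hP, hM, hK, hp]; push_cast; ring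
  have hM2 : (2:ℝ) ≤ M := by rw [hM]; exact_mod_cast hm
  have hK2 : (2:ℝ) ≤ K := by rw [hK]; exact_mod_cast hk
  have hK0 : (0:ℝ) < K := by linarith
  have hM0 : (0:ℝ) < M := by linarith
  have hP0 : (0:ℝ) < P := by rw [hMK]; positivity
  have hp1 : 1 ≤ p := by rw [hp]; exact Nat.one_le_iff_ne_zero.mpr (by positivity)
  -- A1
  have hC : ((p / 2 : ℕ).choose m : ℝ) * (Nat.factorial m : ℝ) ≤ (P / 2) ^ m := by
    have h1 : (p / 2 : ℕ).choose m * Nat.factorial m ≤ (p / 2 : ℕ) ^ m := by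
      rw [mul_comm, ← Nat.descFactorial_eq_factorial_mul_choose]
      exact Nat.descFactorial_le_pow _ _
    calc ((p / 2 : ℕ).choose m : ℝ) * (Nat.factorial m : ℝ)
        ≤ ((p / 2 : ℕ) : ℝ) ^ m := by exact_mod_cast h1
      _ ≤ (P / 2) ^ m := by
          apply pow_le_pow_left₀ (Nat.cast_nonneg _) (Nat.cast_div_le)
  have hFm := factorial_upper m (by omega)
  have hFk := factorial_upper k (by omega)
  have hFp := factorial_lower p hp1
  rw [← hE] at hFm hFk hFp
  rw [← hM] at hFm
  rw [← hK] at hFk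
  rw [← hP] at hFp
  -- key scalar facts
  have key1 : E * Real.sqrt M * (K / E) ^ 2 ≤ (2 * K / E) ^ m := by
    have := g_claim m k hm hk
    rw [← hE, ← hM, ← hK] at this
    exact this
  have key2 : E ^ 2 * K ≤ 2 * π * P := by
    have h8 : E ^ 2 * K ≤ 8 * K :=
      mul_le_mul_of_nonneg_right exp_one_sq_le hK0.le
    have h12 : (2:ℝ) * 3 * 2 ≤ 2 * π * M := by
      nlinarith [Real.pi_gt_three, mul_nonneg (sub_nonneg.mpr (le_of_lt Real.pi_gt_three))
        (sub_nonneg.mpr hM2)]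
    have h12K : ((2:ℝ) * 3 * 2) * K ≤ (2 * π * M) * K :=
      mul_le_mul_of_nonneg_right h12 hK0.le
    rw [hMK]
    nlinarith []
  -- the two sides rearranged
  have hsK : Real.sqrt K ^ 2 = K := Real.sq_sqrt hK0.le
  have hs2 : Real.sqrt (2 * π * P) ^ 2 = 2 * π * P := by
    apply Real.sq_sqrt; positivity
  have eqL : ((P/2)^m)^k * (E * Real.sqrt M * (M/E)^m)^k * (E * Real.sqrt K * (K/E)^k)^2
      = ((P/2)^(m*k) * (M/E)^(m*k)) * ((E * Real.sqrt M * (K/E)^2)^k * (E^2 * K)) := by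
    linear_combination (((P/2)^m)^k * (E * Real.sqrt M * (M/E)^m)^k * E^2 * ((K/E)^k)^2) * hsK
  have eqR : (Real.sqrt (2*π*P) * (P/E)^p)^2
      = ((P/2)^(m*k) * (M/E)^(m*k)) * (((2*K/E)^m)^k * (2*π*P)) := by
    have hbase : (P/E)^2 = (P/2) * (M/E) * (2*K/E) := by
      rw [hMK]; field_simp
    calc (Real.sqrt (2*π*P) * (P/E)^p)^2
        = (Real.sqrt (2*π*P))^2 * ((P/E)^2)^p := by ring
      _ = (2*π*P) * ((P/2) * (M/E) * (2*K/E))^p := by rw [hs2, hbase]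
      _ = (2*π*P) * ((P/2)^p * (M/E)^p * ((2*K/E)^m)^k) := by
          rw [mul_pow, mul_pow]
          rw [show (2*K/E)^p = ((2*K/E)^m)^k by rw [hp, pow_mul]]
      _ = ((P/2)^(m*k) * (M/E)^(m*k)) * (((2*K/E)^m)^k * (2*π*P)) := by rw [hp]; ring
  have hX0 : (0:ℝ) ≤ (P/2)^(m*k) * (M/E)^(m*k) := by positivity
  have B : ((P/2)^m)^k * (E * Real.sqrt M * (M/E)^m)^k * (E * Real.sqrt K * (K/E)^k)^2
      ≤ (Real.sqrt (2*π*P) * (P/E)^p)^2 := by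
    rw [eqL, eqR]
    apply mul_le_mul_of_nonneg_left _ hX0
    apply mul_le_mul
    · exact pow_le_pow_left₀ (by positivity) key1 k
    · exact key2
    · positivity
    · positivity
  -- final chain
  have hkk : p / 2 = m * k / 2 := by rw [hp]
  rw [← hkk]
  calc ((p / 2 : ℕ).choose m : ℝ) ^ k * ((Nat.factorial m : ℝ) ^ k * (Nat.factorial k : ℝ)) ^ 2
      = (((p / 2 : ℕ).choose m : ℝ) * (Nat.factorial m : ℝ)) ^ k * ((Nat.factorial m : ℝ)) ^ k
          * ((Nat.factorial k : ℝ)) ^ 2 := by ring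
    _ ≤ ((P/2)^m)^k * (E * Real.sqrt M * (M/E)^m)^k * (E * Real.sqrt K * (K/E)^k)^2 := by
        apply mul_le_mul
        · apply mul_le_mul
          · exact pow_le_pow_left₀ (by positivity) hC k
          · exact pow_le_pow_left₀ (by positivity) hFm k
          · positivity
          · positivity
        · exact pow_le_pow_left₀ (by positivity) hFk 2
        · positivity
        · positivity
    _ ≤ (Real.sqrt (2*π*P) * (P/E)^p)^2 := B
    _ ≤ ((Nat.factorial p : ℝ)) ^ 2 := by
        exact pow_le_pow_left₀ (by positivity) hFp 2

end Analytic

theorem stmt_14 (p m : ℕ) (hm : 2 ≤ m) (hdvd : m ∣ p) :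
    numBlockPartitions p m
        = Nat.factorial p / (Nat.factorial m ^ (p / m) * Nat.factorial (p / m)) ∧
    ((Nat.choose (p / 2) m : ℝ) ^ ((1 / 2 : ℝ) * (p / m : ℕ))
        ≤ (numBlockPartitions p m : ℝ)) := by
  have hm0 : 0 < m := by omega
  have hpk : p = m * (p / m) := (Nat.mul_div_cancel' hdvd).symm
  have heq := factorial_eq_numBlockPartitions_mul p m hm0 hdvd
  have hD : 0 < Nat.factorial m ^ (p / m) * Nat.factorial (p / m) := by positivity
  refine ⟨(Nat.div_eq_of_eq_mul_left hD heq).symm, ?_⟩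
  rcases Nat.lt_or_ge (p / m) 2 with h2 | h2
  · have h01 : p / m = 0 ∨ p / m = 1 :=
      Nat.le_one_iff_eq_zero_or_eq_one.mp (Nat.le_of_lt_succ h2)
    rcases h01 with h0 | h1
    · have hp0 : p = 0 := by rw [hpk, h0, mul_zero]
      subst hp0
      rw [h0] at heq ⊢
      simp only [Nat.cast_zero, mul_zero, Real.rpow_zero]
      simp only [Nat.factorial_zero, pow_zero, one_mul, mul_one] at heq
      rw [← heq]
      norm_num
    · have hp1 : p = m := by rw [hpk, h1, mul_one]
      have hlt : p / 2 < m := by omega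
      rw [h1, Nat.choose_eq_zero_of_lt hlt]
      rw [Nat.cast_zero, Real.zero_rpow (by norm_num)]
      positivity
  · have hmaster := master m (p / m) hm h2
    rw [← hpk] at hmaster
    set k := p / m
    set C : ℝ := ((p / 2).choose m : ℝ) with hC
    set N := numBlockPartitions p m with hN
    set D : ℝ := (Nat.factorial m : ℝ) ^ k * (Nat.factorial k : ℝ) with hDD
    have hD0 : (0:ℝ) < D := by positivity
    have hcast : (Nat.factorial p : ℝ) = (N : ℝ) * D := by
      rw [hDD]; exact_mod_cast heq
    have hCk : C ^ k ≤ (N : ℝ) ^ 2 := by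
      have h3 : C ^ k * D ^ 2 ≤ (N : ℝ) ^ 2 * D ^ 2 := by
        rw [← mul_pow, ← hcast]; exact hmaster
      exact le_of_mul_le_mul_right h3 (pow_pos hD0 2)
    have hc0 : (0:ℝ) ≤ C := Nat.cast_nonneg _
    have e1 : C ^ ((1 / 2 : ℝ) * (k : ℕ)) = (C ^ k) ^ ((1 / 2 : ℝ)) := by
      rw [mul_comm, Real.rpow_mul hc0, Real.rpow_natCast]
    rw [e1]
    calc (C ^ k) ^ ((1/2 : ℝ)) ≤ ((N:ℝ)^2) ^ ((1/2 : ℝ)) :=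
          Real.rpow_le_rpow (by positivity) hCk (by norm_num)
      _ = (N : ℝ) := by
          rw [show ((N:ℝ)^2) = ((N:ℝ)^(2:ℕ)) from rfl, ← Real.rpow_natCast ((N:ℝ)) 2,
            ← Real.rpow_mul (Nat.cast_nonneg N)]
          norm_num
end
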